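/- Let n≥5, N≥2, and F,G : R^n×(R^N⊗S(n))→R^N Carathéodory maps. Suppose u↦F(·,D²u) is a bijection from W²ₚ,*(R^n)^N onto L²(R^n)^N with ν(F) := inf_{v≠w} ‖F(·,D²w)−F(·,D²v)‖_{L²}/‖D²w−D²v‖_{L²} > 0. If G(·,0)=0 and ν(F,G) := ess sup_x sup_{X≠Y} |(F(x,Y)−F(x,X))−(G(x,Y)−G(x,X))|/|Y−X| < ν(F), then for every g∈L²(R^n)^N the system G(·,D²u)=g a.e. on R^n has a unique solution u∈W²ₚ,*(R^n)^N. -/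

import Mathlib

open Finset MeasureTheory

noncomputable section

/-- Euclidean space `ℝ^n`. -/
abbrev Rn (n : ℕ) := EuclideanSpace ℝ (Fin n)

/-- Tensors in `ℝ^N ⊗ ℝ^{n×n}` (hessian-type arguments). -/
abbrev Tens (N n : ℕ) := Fin N → Fin n → Fin n → ℝ

/-- The contraction `A:Z ∈ ℝ^N`, `(A:Z)_α = A_{αβij} Z_{βij}`. -/
def contA {N n : ℕ} (A : Fin N → Fin N → Fin n → Fin n → ℝ) (Z : Tens N n) : Fin N → ℝ :=
  fun α => ∑ β, ∑ i, ∑ j, A α β i j * Z β i j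

/-- Squared Euclidean norm on `ℝ^N`. -/
def vnorm2 {N : ℕ} (v : Fin N → ℝ) : ℝ := ∑ α, (v α) ^ 2

/-- Squared Frobenius norm on tensors. -/
def tnorm2 {N n : ℕ} (Z : Tens N n) : ℝ := ∑ α, ∑ i, ∑ j, (Z α i j) ^ 2

/-- First partial derivative `D_i u_β`. -/
def D1 {n N : ℕ} (u : Rn n → Fin N → ℝ) (β : Fin N) (i : Fin n) (x : Rn n) : ℝ :=
  fderiv ℝ (fun y => u y β) x (EuclideanSpace.single i (1 : ℝ))

/-- Second partial derivative `D²_{ij} u_β`. -/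
def D2 {n N : ℕ} (u : Rn n → Fin N → ℝ) (β : Fin N) (i j : Fin n) (x : Rn n) : ℝ :=
  fderiv ℝ (fun y => D1 u β i y) x (EuclideanSpace.single j (1 : ℝ))

/-- The hessian tensor `D²u(x) ∈ ℝ^N ⊗ S(n)`. -/
def hess {n N : ℕ} (u : Rn n → Fin N → ℝ) (x : Rn n) : Tens N n := fun β i j => D2 u β i j x

/-- The Sobolev exponent `2* = 2n/(n−2)`. -/
def pStar (n : ℕ) : ENNReal := ENNReal.ofReal (2 * n / (n - 2 : ℝ))

/-- The iterated Sobolev exponent `2** = 2n/(n−4)`. -/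
def pStarStar (n : ℕ) : ENNReal := ENNReal.ofReal (2 * n / (n - 4 : ℝ))

/-- The `L^p(ℝ^n)` norm of a scalar function. -/
def LpN {n : ℕ} (p : ENNReal) (g : Rn n → ℝ) : ℝ := (eLpNorm g p volume).toReal

/-- Membership in the energy space
`W²,²_*(ℝ^n)^N = {u ∈ L^{2**} : Du ∈ L^{2*}, D²u ∈ L²}`, for twice (a.e.) differentiable
maps. -/
def W2StarMem {n N : ℕ} (u : Rn n → Fin N → ℝ) : Prop :=
  (∀ β, ∀ᵐ x : Rn n, DifferentiableAt ℝ (fun y => u y β) x) ∧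
  (∀ β i, ∀ᵐ x : Rn n, DifferentiableAt ℝ (D1 u β i) x) ∧
  MemLp (fun x => Real.sqrt (∑ β, (u x β) ^ 2)) (pStarStar n) volume ∧
  MemLp (fun x => Real.sqrt (∑ β, ∑ i, (D1 u β i x) ^ 2)) (pStar n) volume ∧
  MemLp (fun x => Real.sqrt (tnorm2 (hess u x))) 2 volume

/-- The `W²,²_*` norm `‖u‖_{L^{2**}} + ‖Du‖_{L^{2*}} + ‖D²u‖_{L²}`. -/
def W2StarNorm {n N : ℕ} (u : Rn n → Fin N → ℝ) : ℝ :=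
  LpN (pStarStar n) (fun x => Real.sqrt (∑ β, (u x β) ^ 2)) +
  LpN (pStar n) (fun x => Real.sqrt (∑ β, ∑ i, (D1 u β i x) ^ 2)) +
  LpN 2 (fun x => Real.sqrt (tnorm2 (hess u x)))

abbrev EV (N : ℕ) : Type := EuclideanSpace ℝ (Fin N)
abbrev TV (N n : ℕ) : Type := EuclideanSpace ℝ (Fin N × Fin n × Fin n)
def toE {N : ℕ} (v : Fin N → ℝ) : EV N :=
  (PiLp.continuousLinearEquiv 2 ℝ (fun _ : Fin N => ℝ)).symm v
def toT {N n : ℕ} (Z : Tens N n) : TV N n :=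
  (PiLp.continuousLinearEquiv 2 ℝ (fun _ : Fin N × Fin n × Fin n => ℝ)).symm
    (fun p => Z p.1 p.2.1 p.2.2)

lemma norm_toE {N : ℕ} (v : Fin N → ℝ) : ‖toE v‖ = Real.sqrt (vnorm2 v) := by
  rw [EuclideanSpace.norm_eq]
  simp [toE, vnorm2, Real.norm_eq_abs, sq_abs]

lemma norm_toT {N n : ℕ} (Z : Tens N n) : ‖toT Z‖ = Real.sqrt (tnorm2 Z) := by
  rw [EuclideanSpace.norm_eq]
  simp [toT, tnorm2, Real.norm_eq_abs, sq_abs, Fintype.sum_prod_type]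

lemma toE_sub {N : ℕ} (a b : Fin N → ℝ) : toE (a - b) = toE a - toE b := by
  simp [toE, map_sub]
lemma toE_add {N : ℕ} (a b : Fin N → ℝ) : toE (a + b) = toE a + toE b := by
  simp [toE, map_add]
lemma toT_sub {N n : ℕ} (a b : Tens N n) : toT (a - b) = toT a - toT b := by
  simp only [toT, ← map_sub]
  rfl
lemma toE_inj {N : ℕ} {a b : Fin N → ℝ} (h : toE a = toE b) : a = b := by
  simpa [toE] using (PiLp.continuousLinearEquiv 2 ℝ (fun _ : Fin N => ℝ)).symm.injective h
lemma toT_inj {N n : ℕ} {a b : Tens N n} (h : toT a = toT b) : a = b := by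
  have := (PiLp.continuousLinearEquiv 2 ℝ (fun _ : Fin N × Fin n × Fin n => ℝ)).symm.injective h
  funext β i j
  exact congrFun this (β, i, j)

lemma eLp_toE {n N : ℕ} (f : Rn n → Fin N → ℝ) :
    eLpNorm (fun x => Real.sqrt (vnorm2 (f x))) 2 volume
      = eLpNorm (fun x => toE (f x)) 2 volume := by
  refine eLpNorm_congr_norm_ae (Filter.Eventually.of_forall fun x => ?_)
  rw [norm_toE, Real.norm_of_nonneg (Real.sqrt_nonneg _)]

lemma eLp_toT {n N : ℕ} (Z : Rn n → Tens N n) :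
    eLpNorm (fun x => Real.sqrt (tnorm2 (Z x))) 2 volume
      = eLpNorm (fun x => toT (Z x)) 2 volume := by
  refine eLpNorm_congr_norm_ae (Filter.Eventually.of_forall fun x => ?_)
  rw [norm_toT, Real.norm_of_nonneg (Real.sqrt_nonneg _)]

lemma memE_of_scalar {n N : ℕ} {f : Rn n → Fin N → ℝ}
    (hs : AEStronglyMeasurable (fun x => toE (f x)) volume)
    (h : MemLp (fun x => Real.sqrt (vnorm2 (f x))) 2 volume) :
    MemLp (fun x => toE (f x)) 2 volume :=
  ⟨hs, by rw [← eLp_toE]; exact h.2⟩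

lemma scalar_of_memE {n N : ℕ} {f : Rn n → Fin N → ℝ}
    (h : MemLp (fun x => toE (f x)) 2 volume) :
    MemLp (fun x => Real.sqrt (vnorm2 (f x))) 2 volume := by
  refine ⟨?_, by rw [eLp_toE]; exact h.2⟩
  have := h.1.norm
  refine this.congr (Filter.Eventually.of_forall fun x => ?_)
  exact norm_toE _


lemma meas_D2 {n N : ℕ} (u : Rn n → Fin N → ℝ) (β : Fin N) (i j : Fin n) :
    Measurable (D2 u β i j) :=
  measurable_fderiv_apply_const ℝ (f := fun y => D1 u β i y) (EuclideanSpace.single j (1 : ℝ))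

lemma meas_hess {n N : ℕ} (u : Rn n → Fin N → ℝ) : Measurable (hess u) := by
  refine measurable_pi_lambda _ fun β => measurable_pi_lambda _ fun i =>
    measurable_pi_lambda _ fun j => ?_
  exact meas_D2 u β i j

lemma meas_toT_hess {n N : ℕ} (u : Rn n → Fin N → ℝ) :
    Measurable (fun x => toT (hess u x)) := by
  refine ((PiLp.continuousLinearEquiv 2 ℝ
    (fun _ : Fin N × Fin n × Fin n => ℝ)).symm.continuous.measurable).comp ?_
  exact measurable_pi_lambda _ fun p => meas_D2 u p.1 p.2.1 p.2.2

/-- Carathéodory superposition measurability. -/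
lemma carath {n N : ℕ} {H : Rn n → Tens N n → (Fin N → ℝ)}
    (hm : ∀ X, Measurable fun x => H x X)
    (hc : ∀ᵐ x : Rn n, Continuous fun X => H x X)
    {w : Rn n → Tens N n} (hw : Measurable w) :
    AEMeasurable (fun x => H x (w x)) volume := by
  classical
  set s := toMeasurable volume {x : Rn n | ¬ Continuous fun X => H x X} with hs
  have hs0 : volume s = 0 := by
    rw [hs, measure_toMeasurable]
    exact hc
  have hsm : MeasurableSet s := measurableSet_toMeasurable _ _
  set H' : Rn n → Tens N n → (Fin N → ℝ) := fun x X => if x ∈ s then 0 else H x X with hH'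
  have hcont : ∀ x, Continuous fun X => H' x X := by
    intro x
    by_cases hx : x ∈ s
    · simp only [hH', hx, if_true]; exact continuous_const
    · have : Continuous fun X => H x X := by
        by_contra hcon
        exact hx (subset_toMeasurable _ _ hcon)
      simp only [hH', hx, if_false]; exact this
    
  have hmeas : ∀ X, Measurable fun x => H' x X := fun X =>
    Measurable.ite hsm measurable_const (hm X)
  have huncurry : Measurable (Function.uncurry fun (X : Tens N n) (x : Rn n) => H' x X) :=
    measurable_uncurry_of_continuous_of_measurable hcont hmeas
  have hcomp : Measurable fun x => H' x (w x) :=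
    huncurry.comp (hw.prodMk measurable_id)
  refine ⟨fun x => H' x (w x), hcomp, ?_⟩
  have : ∀ᵐ x : Rn n, x ∉ s := by
    rw [MeasureTheory.ae_iff]
    simpa using hs0
  filter_upwards [this] with x hx
  simp [hH', hx]



lemma eLp_le_mul {n : ℕ} {E' F' : Type*} [NormedAddCommGroup E'] [NormedAddCommGroup F']
    {f : Rn n → E'} {t : Rn n → F'} {c : ℝ} (hc : 0 ≤ c)
    (h : ∀ᵐ x : Rn n, ‖f x‖ ≤ c * ‖t x‖) :
    eLpNorm f 2 volume ≤ ENNReal.ofReal c * eLpNorm t 2 volume := by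
  have h1 : eLpNorm f 2 volume ≤ eLpNorm (fun x => c * ‖t x‖) 2 volume := by
    refine eLpNorm_mono_ae ?_
    filter_upwards [h] with x hx
    rwa [Real.norm_of_nonneg (by positivity)]
  have h2 : eLpNorm (fun x => c * ‖t x‖) 2 volume
      = ENNReal.ofReal c * eLpNorm t 2 volume := by
    have : (fun x => c * ‖t x‖) = c • (fun x => ‖t x‖) := by funext x; simp
    rw [this, eLpNorm_const_smul, eLpNorm_norm, Real.enorm_eq_ofReal hc]
  exact h1.trans h2.le

lemma hess_zero {n N : ℕ} : hess (fun _ : Rn n => (0 : Fin N → ℝ)) = fun _ => (0 : Tens N n) := by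
  funext x β i j
  have hD1 : D1 (fun _ : Rn n => (0 : Fin N → ℝ)) β i = fun _ => (0 : ℝ) := by
    funext y
    simp [D1, fderiv_const_apply (0 : ℝ)]
  simp [hess, D2, hD1, fderiv_const_apply (0 : ℝ)]

lemma W2StarMem_zero {n N : ℕ} : W2StarMem (fun _ : Rn n => (0 : Fin N → ℝ)) := by
  have hD1 : ∀ (β : Fin N) (i : Fin n), D1 (fun _ : Rn n => (0 : Fin N → ℝ)) β i
      = fun _ => (0 : ℝ) := by
    intro β i; funext y; simp [D1, fderiv_const_apply (0 : ℝ)]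
  refine ⟨fun β => Filter.Eventually.of_forall fun x => differentiableAt_const _,
    fun β i => ?_, ?_, ?_, ?_⟩
  · rw [hD1]
    exact Filter.Eventually.of_forall fun x => differentiableAt_const _
  · have : (fun x : Rn n => Real.sqrt (∑ β, ((0 : Fin N → ℝ) β) ^ 2)) = fun _ => 0 := by
      funext x; simp
    rw [this]
    exact MemLp.zero
  · have : (fun x : Rn n => Real.sqrt (∑ β, ∑ i, (D1 (fun _ => (0 : Fin N → ℝ)) β i x) ^ 2))
        = fun _ => 0 := by
      funext x; simp [hD1]
    rw [this]
    exact MemLp.zero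
  · have : (fun x : Rn n => Real.sqrt (tnorm2 (hess (fun _ : Rn n => (0 : Fin N → ℝ)) x)))
        = fun _ => 0 := by
      funext x; simp [hess_zero, tnorm2]
    rw [this]
    exact MemLp.zero

set_option maxHeartbeats 2000000 in
/-- stability of strong global solutions: let `n ≥ 5`, `N ≥ 2` and let
`F, G` be Carathéodory maps. Suppose `u ↦ F(·,D²u)` is a bijection from `W²,²_*(ℝ^n)^N`
onto `L²(ℝ^n)^N` (solvability, uniquely up to a.e. equality) and
`ν(F) ≥ ν_F > 0` in the sense that
`‖F(·,D²w)−F(·,D²v)‖_{L²} ≥ ν_F ‖D²w−D²v‖_{L²}` for all `w, v`. If `G(·,0) = 0` and the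
nearness modulus satisfies `ν(F,G) ≤ ν_{FG} < ν_F`, i.e.
`|(F(x,Y)−F(x,X)) − (G(x,Y)−G(x,X))| ≤ ν_{FG}|Y−X|` for a.e. `x` and all `X, Y`, then for
every `g ∈ L²(ℝ^n)^N` the system `G(·,D²u) = g` a.e. on `ℝ^n` has a solution
`u ∈ W²,²_*(ℝ^n)^N`, unique up to a.e. equality. -/
theorem stmt19 {n N : ℕ} (hn : 5 ≤ n) (hN : 2 ≤ N)
    (F G : Rn n → Tens N n → Fin N → ℝ)
    (hFmeas : ∀ X : Tens N n, Measurable fun x => F x X)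
    (hFcont : ∀ᵐ x : Rn n, Continuous fun X => F x X)
    (hGmeas : ∀ X : Tens N n, Measurable fun x => G x X)
    (hGcont : ∀ᵐ x : Rn n, Continuous fun X => G x X)
    (hFbij : ∀ f : Rn n → Fin N → ℝ,
      MemLp (fun x => Real.sqrt (vnorm2 (f x))) 2 volume →
      ∃ u : Rn n → Fin N → ℝ, W2StarMem u ∧
        (∀ᵐ x : Rn n, ∀ γ, F x (hess u x) γ = f x γ) ∧
        (∀ v : Rn n → Fin N → ℝ, W2StarMem v →
          (∀ᵐ x : Rn n, ∀ γ, F x (hess v x) γ = f x γ) →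
            ∀ᵐ x : Rn n, v x = u x))
    (hFrange : ∀ u : Rn n → Fin N → ℝ, W2StarMem u →
      MemLp (fun x => Real.sqrt (vnorm2 (fun γ => F x (hess u x) γ))) 2 volume)
    (νF : ℝ) (hνF : 0 < νF)
    (hlower : ∀ w v : Rn n → Fin N → ℝ, W2StarMem w → W2StarMem v →
      LpN 2 (fun x => Real.sqrt (vnorm2 (fun γ => F x (hess w x) γ - F x (hess v x) γ))) ≥
        νF * LpN 2 (fun x => Real.sqrt (tnorm2 (hess w x - hess v x))))
    (hG0 : ∀ᵐ x : Rn n, ∀ γ, G x 0 γ = 0)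
    (νFG : ℝ) (hνFG : νFG < νF)
    (hnear : ∀ᵐ x : Rn n, ∀ X Y : Tens N n,
      Real.sqrt (vnorm2 (fun γ =>
          (F x Y γ - F x X γ) - (G x Y γ - G x X γ))) ≤
        νFG * Real.sqrt (tnorm2 (Y - X))) :
    ∀ g : Rn n → Fin N → ℝ,
      MemLp (fun x => Real.sqrt (vnorm2 (g x))) 2 volume →
      ∃ u : Rn n → Fin N → ℝ, W2StarMem u ∧
        (∀ᵐ x : Rn n, ∀ γ, G x (hess u x) γ = g x γ) ∧
        (∀ v : Rn n → Fin N → ℝ, W2StarMem v →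
          (∀ᵐ x : Rn n, ∀ γ, G x (hess v x) γ = g x γ) →
            ∀ᵐ x : Rn n, v x = u x) := by
  classical
  -- basic constants
  have h20 : (2 : ENNReal) ≠ 0 := by norm_num
  have hvolne : (volume : Measure (Rn n)) ≠ 0 := by
    intro h0
    have hb : 0 < volume (Metric.ball (0 : Rn n) 1) := Metric.measure_ball_pos volume (0 : Rn n) one_pos
    rw [h0] at hb
    simp at hb
  haveI := ae_neBot.2 hvolne
  -- CONT1
  -- νFG is nonnegative
  have hνFG0 : 0 ≤ νFG := by
    obtain ⟨x, hx⟩ := hnear.exists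
    have h1 := hx 0 (fun _ _ _ => (1 : ℝ))
    have h2 : (0:ℝ) < Real.sqrt (tnorm2 ((fun _ _ _ => (1:ℝ)) - (0 : Tens N n))) := by
      have : tnorm2 ((fun _ _ _ => (1:ℝ)) - (0 : Tens N n)) = (N : ℝ) * (n * n) := by
        simp [tnorm2, Pi.sub_apply]
      rw [this]
      have hN' : (0:ℝ) < N := by exact_mod_cast Nat.lt_of_lt_of_le (by norm_num) hN
      have hn' : (0:ℝ) < n := by exact_mod_cast Nat.lt_of_lt_of_le (by norm_num) hn
      have : (0:ℝ) < (N : ℝ) * ((n:ℝ) * n) := by positivity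
      exact Real.sqrt_pos.2 (by assumption)
    nlinarith [Real.sqrt_nonneg (vnorm2 (fun γ =>
      (F x (fun _ _ _ => (1:ℝ)) γ - F x 0 γ) - (G x (fun _ _ _ => (1:ℝ)) γ - G x 0 γ)))]
  set α := νFG / νF with hαdef
  have hα0 : 0 ≤ α := div_nonneg hνFG0 hνF.le
  have hα1 : α < 1 := (div_lt_one hνF).2 hνFG
  -- measurability of superpositions
  have aesmF : ∀ u : Rn n → Fin N → ℝ,
      AEStronglyMeasurable (fun x => toE (F x (hess u x))) volume := by
    intro u
    have h1 := carath hFmeas hFcont (meas_hess u)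
    exact (((PiLp.continuousLinearEquiv 2 ℝ
      (fun _ : Fin N => ℝ)).symm.continuous.measurable.comp_aemeasurable
        h1)).aestronglyMeasurable
  have aesmG : ∀ u : Rn n → Fin N → ℝ,
      AEStronglyMeasurable (fun x => toE (G x (hess u x))) volume := by
    intro u
    have h1 := carath hGmeas hGcont (meas_hess u)
    exact (((PiLp.continuousLinearEquiv 2 ℝ
      (fun _ : Fin N => ℝ)).symm.continuous.measurable.comp_aemeasurable
        h1)).aestronglyMeasurable
  have aesmF0 : AEStronglyMeasurable (fun x => toE (F x 0)) volume := by
    have h1 : Measurable fun x : Rn n => toE (F x 0) :=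
      ((PiLp.continuousLinearEquiv 2 ℝ
        (fun _ : Fin N => ℝ)).symm.continuous.measurable).comp (hFmeas 0)
    exact h1.aestronglyMeasurable
  -- membership facts
  have memT : ∀ u : Rn n → Fin N → ℝ, W2StarMem u →
      MemLp (fun x => toT (hess u x)) 2 volume := by
    intro u hu
    exact ⟨(meas_toT_hess u).aestronglyMeasurable, by rw [← eLp_toT]; exact hu.2.2.2.2.2⟩
  have memF : ∀ u : Rn n → Fin N → ℝ, W2StarMem u →
      MemLp (fun x => toE (F x (hess u x))) 2 volume := fun u hu =>
    memE_of_scalar (aesmF u) (hFrange u hu)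
  have memF0 : MemLp (fun x => toE (F x 0)) 2 volume := by
    refine memE_of_scalar aesmF0 ?_
    have h0 := hFrange _ (W2StarMem_zero (n := n) (N := N))
    simpa [hess_zero] using h0
  have memG : ∀ u : Rn n → Fin N → ℝ, W2StarMem u →
      MemLp (fun x => toE (G x (hess u x))) 2 volume := by
    intro u hu
    have hb : ∀ᵐ x : Rn n,
        ‖toE (F x (hess u x)) - toE (F x 0) - toE (G x (hess u x))‖
          ≤ νFG * ‖toT (hess u x)‖ := by
      filter_upwards [hnear, hG0] with x hx hx0
      have h1 := hx 0 (hess u x)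
      have ha : (fun γ => F x (hess u x) γ - F x 0 γ - (G x (hess u x) γ - G x 0 γ))
          = F x (hess u x) - F x 0 - G x (hess u x) := by
        funext γ
        simp [Pi.sub_apply, hx0 γ]
      rw [ha] at h1
      have hb1 : ‖toE (F x (hess u x)) - toE (F x 0) - toE (G x (hess u x))‖
          = Real.sqrt (vnorm2 (F x (hess u x) - F x 0 - G x (hess u x))) := by
        rw [← toE_sub, ← toE_sub, norm_toE]
      have hb2 : ‖toT (hess u x)‖ = Real.sqrt (tnorm2 (hess u x - 0)) := by
        rw [sub_zero, norm_toT]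
      rw [hb1, hb2]
      exact h1
    have hmid : MemLp
        (fun x => toE (F x (hess u x)) - toE (F x 0) - toE (G x (hess u x))) 2 volume :=
      (memT u hu).of_le_mul (((memF u hu).aestronglyMeasurable.sub aesmF0).sub
        (aesmG u)) hb
    have hdecomp : (fun x => toE (G x (hess u x)))
        = fun x => (toE (F x (hess u x)) - toE (F x 0))
            - (toE (F x (hess u x)) - toE (F x 0) - toE (G x (hess u x))) := by
      funext x; abel
    rw [hdecomp]
    exact ((memF u hu).sub memF0).sub hmid
  -- the near-inequality at the L² level
  have key : ∀ w v : Rn n → Fin N → ℝ, W2StarMem w → W2StarMem v →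
      eLpNorm (fun x => (toE (F x (hess w x)) - toE (G x (hess w x)))
          - (toE (F x (hess v x)) - toE (G x (hess v x)))) 2 volume
        ≤ ENNReal.ofReal νFG
            * eLpNorm (fun x => toT (hess w x) - toT (hess v x)) 2 volume := by
    intro w v hw hv
    refine eLp_le_mul hνFG0 ?_
    filter_upwards [hnear] with x hx
    have h1 := hx (hess v x) (hess w x)
    have ha : (fun γ => F x (hess w x) γ - F x (hess v x) γ
          - (G x (hess w x) γ - G x (hess v x) γ))
        = F x (hess w x) - G x (hess w x) - (F x (hess v x) - G x (hess v x)) := by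
      funext γ
      simp only [Pi.sub_apply]
      ring
    rw [ha] at h1
    have hb1 : ‖toE (F x (hess w x)) - toE (G x (hess w x))
        - (toE (F x (hess v x)) - toE (G x (hess v x)))‖
        = Real.sqrt (vnorm2 (F x (hess w x) - G x (hess w x)
            - (F x (hess v x) - G x (hess v x)))) := by
      rw [← toE_sub, ← toE_sub, ← toE_sub, norm_toE]
    have hb2 : ‖toT (hess w x) - toT (hess v x)‖
        = Real.sqrt (tnorm2 (hess w x - hess v x)) := by
      rw [← toT_sub, norm_toT]
    rw [hb1, hb2]
    exact h1
  -- the lower bound at the L² level, real form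
  have lower2 : ∀ w v : Rn n → Fin N → ℝ, W2StarMem w → W2StarMem v →
      νF * (eLpNorm (fun x => toT (hess w x) - toT (hess v x)) 2 volume).toReal
        ≤ (eLpNorm (fun x => toE (F x (hess w x)) - toE (F x (hess v x))) 2
            volume).toReal := by
    intro w v hw hv
    have h0 := hlower w v hw hv
    have e1 : LpN 2 (fun x => Real.sqrt (vnorm2
          (fun γ => F x (hess w x) γ - F x (hess v x) γ)))
        = (eLpNorm (fun x => toE (F x (hess w x)) - toE (F x (hess v x))) 2
            volume).toReal := by
      unfold LpN
      congr 1
      refine eLpNorm_congr_norm_ae (Filter.Eventually.of_forall fun x => ?_)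
      rw [Real.norm_of_nonneg (Real.sqrt_nonneg _), ← toE_sub]
      exact (norm_toE _).symm
    have e2 : LpN 2 (fun x => Real.sqrt (tnorm2 (hess w x - hess v x)))
        = (eLpNorm (fun x => toT (hess w x) - toT (hess v x)) 2 volume).toReal := by
      unfold LpN
      congr 1
      refine eLpNorm_congr_norm_ae (Filter.Eventually.of_forall fun x => ?_)
      rw [Real.norm_of_nonneg (Real.sqrt_nonneg _), ← toT_sub]
      exact (norm_toT _).symm
    rw [e1] at h0
    rw [e2] at h0
    linarith
  -- real-level contraction estimate
  have contr : ∀ w v : Rn n → Fin N → ℝ, W2StarMem w → W2StarMem v →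
      (eLpNorm (fun x => (toE (F x (hess w x)) - toE (G x (hess w x)))
          - (toE (F x (hess v x)) - toE (G x (hess v x)))) 2 volume).toReal
        ≤ α * (eLpNorm (fun x => toE (F x (hess w x)) - toE (F x (hess v x))) 2
            volume).toReal := by
    intro w v hw hv
    have hkey := key w v hw hv
    have hTfin : eLpNorm (fun x => toT (hess w x) - toT (hess v x)) 2 volume ≠ ⊤ :=
      ((memT w hw).sub (memT v hv)).2.ne
    have h1 : (eLpNorm (fun x => (toE (F x (hess w x)) - toE (G x (hess w x)))
          - (toE (F x (hess v x)) - toE (G x (hess v x)))) 2 volume).toReal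
        ≤ νFG * (eLpNorm (fun x => toT (hess w x) - toT (hess v x)) 2
            volume).toReal := by
      have h2 := ENNReal.toReal_mono (ENNReal.mul_ne_top ENNReal.ofReal_ne_top hTfin) hkey
      rwa [ENNReal.toReal_mul, ENNReal.toReal_ofReal hνFG0] at h2
    have h2 := lower2 w v hw hv
    have hT0 : 0 ≤ (eLpNorm (fun x => toT (hess w x) - toT (hess v x)) 2
        volume).toReal := ENNReal.toReal_nonneg
    have h3 : (eLpNorm (fun x => toT (hess w x) - toT (hess v x)) 2 volume).toReal
        ≤ (eLpNorm (fun x => toE (F x (hess w x)) - toE (F x (hess v x))) 2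
            volume).toReal / νF := by
      rw [le_div_iff₀ hνF]
      linarith
    calc (eLpNorm (fun x => (toE (F x (hess w x)) - toE (G x (hess w x)))
          - (toE (F x (hess v x)) - toE (G x (hess v x)))) 2 volume).toReal
        ≤ νFG * (eLpNorm (fun x => toT (hess w x) - toT (hess v x)) 2
            volume).toReal := h1
      _ ≤ νFG * ((eLpNorm (fun x => toE (F x (hess w x)) - toE (F x (hess v x))) 2
            volume).toReal / νF) := by
          exact mul_le_mul_of_nonneg_left h3 hνFG0
      _ = α * (eLpNorm (fun x => toE (F x (hess w x)) - toE (F x (hess v x))) 2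
            volume).toReal := by
          rw [hαdef]; ring
  -- general uniqueness
  have uniqGen : ∀ (h : Rn n → Fin N → ℝ) (w v : Rn n → Fin N → ℝ),
      W2StarMem w → W2StarMem v →
      (∀ᵐ x : Rn n, ∀ γ, G x (hess w x) γ = h x γ) →
      (∀ᵐ x : Rn n, ∀ γ, G x (hess v x) γ = h x γ) →
      ∀ᵐ x : Rn n, v x = w x := by
    intro h w v hw hv hgw hgv
    have hpt : ∀ᵐ x : Rn n, ‖toE (F x (hess w x)) - toE (F x (hess v x))‖
        ≤ νFG * ‖toT (hess w x) - toT (hess v x)‖ := by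
      filter_upwards [hnear, hgw, hgv] with x hx h1 h2
      have h3 := hx (hess v x) (hess w x)
      have hG : (fun γ => F x (hess w x) γ - F x (hess v x) γ
            - (G x (hess w x) γ - G x (hess v x) γ))
          = F x (hess w x) - F x (hess v x) := by
        funext γ
        simp only [Pi.sub_apply]
        rw [h1 γ, h2 γ]
        ring
      rw [hG] at h3
      have hb1 : ‖toE (F x (hess w x)) - toE (F x (hess v x))‖
          = Real.sqrt (vnorm2 (F x (hess w x) - F x (hess v x))) := by
        rw [← toE_sub, norm_toE]
      have hb2 : ‖toT (hess w x) - toT (hess v x)‖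
          = Real.sqrt (tnorm2 (hess w x - hess v x)) := by
        rw [← toT_sub, norm_toT]
      rw [hb1, hb2]
      exact h3
    have hF2 : eLpNorm (fun x => toE (F x (hess w x)) - toE (F x (hess v x))) 2 volume
        ≤ ENNReal.ofReal νFG
            * eLpNorm (fun x => toT (hess w x) - toT (hess v x)) 2 volume :=
      eLp_le_mul hνFG0 hpt
    have hTfin : eLpNorm (fun x => toT (hess w x) - toT (hess v x)) 2 volume ≠ ⊤ :=
      ((memT w hw).sub (memT v hv)).2.ne
    have hFr : (eLpNorm (fun x => toE (F x (hess w x)) - toE (F x (hess v x))) 2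
        volume).toReal ≤ νFG * (eLpNorm (fun x => toT (hess w x) - toT (hess v x)) 2
          volume).toReal := by
      have h2 := ENNReal.toReal_mono (ENNReal.mul_ne_top ENNReal.ofReal_ne_top hTfin) hF2
      rwa [ENNReal.toReal_mul, ENNReal.toReal_ofReal hνFG0] at h2
    have hl := lower2 w v hw hv
    have hT0 : (eLpNorm (fun x => toT (hess w x) - toT (hess v x)) 2 volume).toReal
        = 0 := by
      nlinarith [ENNReal.toReal_nonneg (a := eLpNorm
        (fun x => toT (hess w x) - toT (hess v x)) 2 volume)]
    have hTz : eLpNorm (fun x => toT (hess w x) - toT (hess v x)) 2 volume = 0 := by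
      rcases ENNReal.toReal_eq_zero_iff _ |>.1 hT0 with h' | h'
      · exact h'
      · exact absurd h' hTfin
    have hae : ∀ᵐ x : Rn n, toT (hess w x) - toT (hess v x) = 0 := by
      have := (eLpNorm_eq_zero_iff
        (((meas_toT_hess w).sub (meas_toT_hess v)).aestronglyMeasurable) h20).1 hTz
      filter_upwards [this] with x hx
      exact hx
    have haehess : ∀ᵐ x : Rn n, hess w x = hess v x := by
      filter_upwards [hae] with x hx
      exact toT_inj (sub_eq_zero.1 hx)
    obtain ⟨u', hu', hFu', huniq⟩ := hFbij (fun x => F x (hess w x)) (hFrange w hw)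
    have h1 := huniq w hw (Filter.Eventually.of_forall fun x γ => rfl)
    have h2 := huniq v hv (by
      filter_upwards [haehess] with x hx γ
      rw [hx])
    filter_upwards [h1, h2] with x e1 e2
    rw [e2, e1]
  -- solver with choice
  have solver : ∀ f : Rn n → Fin N → ℝ, MemLp (fun x => toE (f x)) 2 volume →
      ∃ u, W2StarMem u ∧ (∀ᵐ x : Rn n, ∀ γ, F x (hess u x) γ = f x γ) := by
    intro f hf
    obtain ⟨u, h1, h2, _⟩ := hFbij f (scalar_of_memE hf)
    exact ⟨u, h1, h2⟩
  choose sol hsol1 hsol2 using solver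
  -- existence for measurable data
  have main : ∀ gm : Rn n → Fin N → ℝ, MemLp (fun x => toE (gm x)) 2 volume →
      ∃ u, W2StarMem u ∧ (∀ᵐ x : Rn n, ∀ γ, G x (hess u x) γ = gm x γ) := by
    intro gm hgm
    have memf' : ∀ p : {p : (Rn n → Fin N → ℝ) × (Rn n → Fin N → ℝ) //
        MemLp (fun x => toE (p.1 x)) 2 volume ∧ W2StarMem p.2 ∧
          (∀ᵐ x : Rn n, ∀ γ, F x (hess p.2 x) γ = p.1 x γ)},
        MemLp (fun x => toE (p.1.1 x - G x (hess p.1.2 x) + gm x)) 2 volume := by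
      rintro ⟨⟨f0, u0⟩, hp1, hp2, hp3⟩
      have he : (fun x => toE (f0 x - G x (hess u0 x) + gm x))
          = fun x => toE (f0 x) - toE (G x (hess u0 x)) + toE (gm x) := by
        funext x
        rw [toE_add, toE_sub]
      rw [he]
      exact (hp1.sub (memG u0 hp2)).add hgm
    let step : {p : (Rn n → Fin N → ℝ) × (Rn n → Fin N → ℝ) //
        MemLp (fun x => toE (p.1 x)) 2 volume ∧ W2StarMem p.2 ∧
          (∀ᵐ x : Rn n, ∀ γ, F x (hess p.2 x) γ = p.1 x γ)} →
        {p : (Rn n → Fin N → ℝ) × (Rn n → Fin N → ℝ) //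
        MemLp (fun x => toE (p.1 x)) 2 volume ∧ W2StarMem p.2 ∧
          (∀ᵐ x : Rn n, ∀ γ, F x (hess p.2 x) γ = p.1 x γ)} := fun p =>
      ⟨(fun x => p.1.1 x - G x (hess p.1.2 x) + gm x, sol _ (memf' p)),
        memf' p, hsol1 _ (memf' p), hsol2 _ (memf' p)⟩
    let p0 : {p : (Rn n → Fin N → ℝ) × (Rn n → Fin N → ℝ) //
        MemLp (fun x => toE (p.1 x)) 2 volume ∧ W2StarMem p.2 ∧
          (∀ᵐ x : Rn n, ∀ γ, F x (hess p.2 x) γ = p.1 x γ)} :=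
      ⟨(gm, sol gm hgm), hgm, hsol1 _ hgm, hsol2 _ hgm⟩
    let sq := fun k => step^[k] p0
    let f : ℕ → Rn n → Fin N → ℝ := fun k => (sq k).1.1
    let u : ℕ → Rn n → Fin N → ℝ := fun k => (sq k).1.2
    have hmemf : ∀ k, MemLp (fun x => toE (f k x)) 2 volume := fun k => (sq k).2.1
    have hWu : ∀ k, W2StarMem (u k) := fun k => (sq k).2.2.1
    have hFf : ∀ k, ∀ᵐ x : Rn n, ∀ γ, F x (hess (u k) x) γ = f k x γ :=
      fun k => (sq k).2.2.2
    have hrec : ∀ k, f (k+1) = fun x => f k x - G x (hess (u k) x) + gm x := by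
      intro k
      show ((step^[k+1]) p0).1.1 = _
      rw [Function.iterate_succ_apply']
    -- the sequence in L²
    let FL : ℕ → Lp (EV N) 2 volume := fun k => (hmemf k).toLp _
    have hnormFL : ∀ j l : ℕ, ‖FL j - FL l‖
        = (eLpNorm (fun x => toE (f j x) - toE (f l x)) 2 volume).toReal := by
      intro j l
      have h1 : FL j - FL l = ((hmemf j).sub (hmemf l)).toLp _ :=
        (MemLp.toLp_sub (hmemf j) (hmemf l)).symm
      rw [h1, Lp.norm_toLp]
      rfl
    have hstepnorm : ∀ k, ‖FL (k+2) - FL (k+1)‖ ≤ α * ‖FL (k+1) - FL k‖ := by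
      intro k
      have e1 : eLpNorm (fun x => toE (f (k+2) x) - toE (f (k+1) x)) 2 volume
          = eLpNorm (fun x => (toE (F x (hess (u (k+1)) x)) - toE (G x (hess (u (k+1)) x)))
              - (toE (F x (hess (u k) x)) - toE (G x (hess (u k) x)))) 2 volume := by
        refine eLpNorm_congr_ae ?_
        filter_upwards [hFf (k+1), hFf k] with x h1 h2
        have hFw : F x (hess (u (k+1)) x) = f (k+1) x := funext h1
        have hFv : F x (hess (u k) x) = f k x := funext h2
        have hf2 : f (k+2) x = f (k+1) x - G x (hess (u (k+1)) x) + gm x := by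
          rw [hrec (k+1)]
        have hf1 : f (k+1) x = f k x - G x (hess (u k) x) + gm x := by
          rw [hrec k]
        rw [hFw, hFv, hf2, hf1]
        simp only [toE_add, toE_sub]
        abel
      have e2 : eLpNorm (fun x => toE (F x (hess (u (k+1)) x))
            - toE (F x (hess (u k) x))) 2 volume
          = eLpNorm (fun x => toE (f (k+1) x) - toE (f k x)) 2 volume := by
        refine eLpNorm_congr_ae ?_
        filter_upwards [hFf (k+1), hFf k] with x h1 h2
        rw [funext h1, funext h2]
      rw [hnormFL (k+2) (k+1), hnormFL (k+1) k, e1]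
      calc (eLpNorm (fun x => (toE (F x (hess (u (k+1)) x)) - toE (G x (hess (u (k+1)) x)))
              - (toE (F x (hess (u k) x)) - toE (G x (hess (u k) x)))) 2 volume).toReal
          ≤ α * (eLpNorm (fun x => toE (F x (hess (u (k+1)) x))
              - toE (F x (hess (u k) x))) 2 volume).toReal :=
            contr (u (k+1)) (u k) (hWu (k+1)) (hWu k)
        _ = α * (eLpNorm (fun x => toE (f (k+1) x) - toE (f k x)) 2 volume).toReal := by
            rw [e2]
    have hgeo : ∀ k, ‖FL (k+1) - FL k‖ ≤ ‖FL 1 - FL 0‖ * α ^ k := by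
      intro k
      induction k with
      | zero => simp
      | succ k ih =>
        calc ‖FL (k+2) - FL (k+1)‖ ≤ α * ‖FL (k+1) - FL k‖ := hstepnorm k
          _ ≤ α * (‖FL 1 - FL 0‖ * α ^ k) := mul_le_mul_of_nonneg_left ih hα0
          _ = ‖FL 1 - FL 0‖ * α ^ (k+1) := by ring
    have hcauchy : CauchySeq FL := by
      refine cauchySeq_of_le_geometric α (‖FL 1 - FL 0‖) hα1 fun k => ?_
      rw [dist_eq_norm, norm_sub_rev]
      exact hgeo k
    obtain ⟨Φ, hΦ⟩ := cauchySeq_tendsto_of_complete hcauchy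
    let fstar : Rn n → Fin N → ℝ := fun x =>
      (PiLp.continuousLinearEquiv 2 ℝ (fun _ : Fin N => ℝ)) ((Φ : Rn n → EV N) x)
    have htoEfstar : (fun x => toE (fstar x)) = (Φ : Rn n → EV N) := by
      funext x
      simp only [toE, fstar]
      exact (PiLp.continuousLinearEquiv 2 ℝ
        (fun _ : Fin N => ℝ)).symm_apply_apply _
    have hmemfstar : MemLp (fun x => toE (fstar x)) 2 volume := by
      rw [htoEfstar]
      exact Lp.memLp Φ
    set ustar := sol fstar hmemfstar with hustar
    have hWustar : W2StarMem ustar := hsol1 _ _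
    have hFstar : ∀ᵐ x : Rn n, ∀ γ, F x (hess ustar x) γ = fstar x γ := hsol2 _ _
    -- identify the limit
    have hFustarLp : (memF ustar hWustar).toLp _ = Φ := by
      have h1 : (fun x => toE (F x (hess ustar x))) =ᵐ[volume]
          fun x => toE (fstar x) := by
        filter_upwards [hFstar] with x hx
        rw [funext hx]
      calc (memF ustar hWustar).toLp _ = hmemfstar.toLp _ :=
            MemLp.toLp_congr _ _ h1
        _ = (Lp.memLp Φ).toLp _ := MemLp.toLp_congr _ _
            (Filter.Eventually.of_forall fun x => congrFun htoEfstar x)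
        _ = Φ := Lp.toLp_coeFn Φ (Lp.memLp Φ)
    have hMmem : MemLp (fun x => toE (G x (hess ustar x)) - toE (gm x)) 2 volume :=
      (memG ustar hWustar).sub hgm
    have hbound : ∀ k, ‖hMmem.toLp _‖
        ≤ (2 + α) * ‖Φ - FL k‖ + ‖FL (k+1) - Φ‖ := by
      intro k
      have hGdmem : MemLp (fun x => toE (G x (hess ustar x))
          - toE (G x (hess (u k) x))) 2 volume :=
        (memG ustar hWustar).sub (memG (u k) (hWu k))
      have hfdmem : MemLp (fun x => toE (f (k+1) x) - toE (f k x)) 2 volume :=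
        (hmemf (k+1)).sub (hmemf k)
      have hdecomp : ∀ x, toE (G x (hess ustar x)) - toE (gm x)
          = (toE (G x (hess ustar x)) - toE (G x (hess (u k) x)))
              - (toE (f (k+1) x) - toE (f k x)) := by
        intro x
        have hf1 : f (k+1) x = f k x - G x (hess (u k) x) + gm x := by rw [hrec k]
        rw [hf1, toE_add, toE_sub]
        abel
      have hsplit : hMmem.toLp _ = hGdmem.toLp _ - hfdmem.toLp _ := by
        rw [← MemLp.toLp_sub hGdmem hfdmem]
        exact MemLp.toLp_congr _ _ (Filter.Eventually.of_forall hdecomp)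
      have hKmem : MemLp (fun x => (toE (F x (hess ustar x)) - toE (G x (hess ustar x)))
          - (toE (F x (hess (u k) x)) - toE (G x (hess (u k) x)))) 2 volume :=
        ((memF ustar hWustar).sub (memG ustar hWustar)).sub
          ((memF (u k) (hWu k)).sub (memG (u k) (hWu k)))
      have hFdmem : MemLp (fun x => toE (F x (hess ustar x))
          - toE (F x (hess (u k) x))) 2 volume :=
        (memF ustar hWustar).sub (memF (u k) (hWu k))
      have hsplit2 : hGdmem.toLp _ = hFdmem.toLp _ - hKmem.toLp _ := by
        rw [← MemLp.toLp_sub hFdmem hKmem]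
        refine MemLp.toLp_congr _ _ (Filter.Eventually.of_forall fun x => ?_)
        simp only [Pi.sub_apply]
        abel
      have hK : ‖hKmem.toLp _‖ ≤ α * ‖hFdmem.toLp _‖ := by
        rw [Lp.norm_toLp, Lp.norm_toLp]
        exact contr ustar (u k) hWustar (hWu k)
      have hFLk : (memF (u k) (hWu k)).toLp _ = FL k := by
        refine MemLp.toLp_congr _ _ ?_
        filter_upwards [hFf k] with x hx
        rw [funext hx]
      have hFd : hFdmem.toLp _ = Φ - FL k := by
        have h2 : hFdmem.toLp _
            = (memF ustar hWustar).toLp _ - (memF (u k) (hWu k)).toLp _ :=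
          MemLp.toLp_sub (f := fun x => toE (F x (hess ustar x)))
            (g := fun x => toE (F x (hess (u k) x)))
            (memF ustar hWustar) (memF (u k) (hWu k))
        rw [h2, hFustarLp, hFLk]
      have hGd2 : ‖hGdmem.toLp _‖ ≤ (1 + α) * ‖Φ - FL k‖ := by
        calc ‖hGdmem.toLp _‖ ≤ ‖hFdmem.toLp _‖ + ‖hKmem.toLp _‖ := by
              rw [hsplit2]; exact norm_sub_le _ _
          _ ≤ ‖hFdmem.toLp _‖ + α * ‖hFdmem.toLp _‖ := by linarith
          _ = (1 + α) * ‖hFdmem.toLp _‖ := by ring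
          _ = (1 + α) * ‖Φ - FL k‖ := by rw [hFd]
      have hfd : hfdmem.toLp _ = FL (k+1) - FL k :=
        MemLp.toLp_sub (f := fun x => toE (f (k+1) x)) (g := fun x => toE (f k x))
          (hmemf (k+1)) (hmemf k)
      have htri : ‖FL (k+1) - FL k‖ ≤ ‖FL (k+1) - Φ‖ + ‖Φ - FL k‖ := by
        have := dist_triangle (FL (k+1)) Φ (FL k)
        simpa [dist_eq_norm] using this
      calc ‖hMmem.toLp _‖ ≤ ‖hGdmem.toLp _‖ + ‖hfdmem.toLp _‖ := by
            rw [hsplit]; exact norm_sub_le _ _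
        _ ≤ (1 + α) * ‖Φ - FL k‖ + (‖FL (k+1) - Φ‖ + ‖Φ - FL k‖) := by
            refine add_le_add hGd2 ?_
            rw [hfd]
            exact htri
        _ = (2 + α) * ‖Φ - FL k‖ + ‖FL (k+1) - Φ‖ := by ring
    have hten1 : Filter.Tendsto (fun k => ‖Φ - FL k‖) Filter.atTop (nhds 0) := by
      have h1 := tendsto_iff_dist_tendsto_zero.1 hΦ
      simpa [dist_eq_norm, norm_sub_rev] using h1
    have hten2 : Filter.Tendsto (fun k => ‖FL (k+1) - Φ‖) Filter.atTop (nhds 0) := by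
      have h1 := tendsto_iff_dist_tendsto_zero.1 (hΦ.comp (Filter.tendsto_add_atTop_nat 1))
      simpa [dist_eq_norm, Function.comp] using h1
    have htot : Filter.Tendsto (fun k => (2 + α) * ‖Φ - FL k‖ + ‖FL (k+1) - Φ‖)
        Filter.atTop (nhds 0) := by
      have h1 := (hten1.const_mul (2 + α)).add hten2
      simpa using h1
    have hM0 : ‖hMmem.toLp _‖ ≤ 0 :=
      ge_of_tendsto htot (Filter.Eventually.of_forall hbound)
    have hMz : hMmem.toLp _ = (0 : Lp (EV N) 2 volume) :=
      norm_eq_zero.1 (le_antisymm hM0 (norm_nonneg _))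
    have hae0 : (fun x => toE (G x (hess ustar x)) - toE (gm x)) =ᵐ[volume]
        (0 : Rn n → EV N) := by
      refine (MemLp.toLp_eq_toLp_iff hMmem MemLp.zero).1 ?_
      rw [hMz, MemLp.toLp_zero]
    refine ⟨ustar, hWustar, ?_⟩
    filter_upwards [hae0] with x hx γ
    have h1 : toE (G x (hess ustar x)) = toE (gm x) := by
      have hx' : toE (G x (hess ustar x)) - toE (gm x) = 0 := hx
      exact sub_eq_zero.1 hx'
    exact congrFun (toE_inj h1) γ
  -- assembly
  intro g hg
  obtain ⟨u₀, hu₀, hFu₀, _⟩ := hFbij g hg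
  obtain ⟨u, hWu', hGu⟩ := main (fun x => F x (hess u₀ x)) (memF u₀ hu₀)
  have hGu' : ∀ᵐ x : Rn n, ∀ γ, G x (hess u x) γ = g x γ := by
    filter_upwards [hGu, hFu₀] with x h1 h2 γ
    rw [h1 γ, h2 γ]
  refine ⟨u, hWu', hGu', ?_⟩
  intro v hv hgv
  exact uniqGen g u v hWu' hv hGu' hgv
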